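/- Let x be an n-dimensional observable on the k-perfect MV-algebra M = Γ(ℤ ⋉ G,(k,0)) and let F = F_x be its spectral resolution. Then T_k is nonempty, T_k has exactly one characteristic point t⁰ = (t⁰_1,…,t⁰_n), and T_k = (t⁰_1,+∞) × ⋯ × (t⁰_n,+∞). -/

import Mathlib

open Function Set

/-- A partially ordered set is Dedekind σ-complete if every monotone increasing
sequence bounded above has a supremum. -/
def DedekindSigmaComplete (G : Type*) [Preorder G] : Prop :=
  ∀ f : ℕ → G, Monotone f → BddAbove (Set.range f) → ∃ g, IsLUB (Set.range f) g

section Lexi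

variable {H : Type*} [AddCommGroup H] [LinearOrder H] [IsOrderedAddMonoid H]
variable {G : Type*} [AddCommGroup G] [Lattice G] [CovariantClass G G (· + ·) (· ≤ ·)]

/-- `u` is a strong unit of `H`. -/
def IsStrongUnit (u : H) : Prop := ∀ h : H, ∃ n : ℕ, 0 < n ∧ h ≤ n • u

/-- The underlying set of the lexicographic MV-algebra `Γ(H ⋉ G, (u,0))`. -/
def MSet (u : H) : Set (H ×ₗ G) := Set.Icc (toLex ((0 : H), (0 : G))) (toLex (u, (0 : G)))

/-- `M_h`: the elements of `M` whose first coordinate is `h`. -/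
def MLevel (u h : H) : Set (H ×ₗ G) := {z ∈ MSet (G := G) u | (ofLex z).1 = h}

/-- A sequence of elements of `M` is summable if all its finite partial sums lie in `M`. -/
def SummableSeq (u : H) (a : ℕ → H ×ₗ G) : Prop := ∀ F : Finset ℕ, ∑ m ∈ F, a m ∈ MSet u

/-- `x` is an `n`-dimensional observable on `Γ(H ⋉ G, (u,0))`. -/
def IsObservable (u : H) (n : ℕ) (x : Set (Fin n → ℝ) → H ×ₗ G) : Prop :=
  (∀ A : Set (Fin n → ℝ), MeasurableSet A → x A ∈ MSet u) ∧
  x Set.univ = toLex (u, (0 : G)) ∧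
  ∀ A : ℕ → Set (Fin n → ℝ), (∀ m, MeasurableSet (A m)) → Pairwise (Disjoint on A) →
    (∀ F : Finset ℕ, ∑ m ∈ F, x (A m) ∈ MSet u) ∧
    IsLUB {y | ∃ F : Finset ℕ, y = ∑ m ∈ F, x (A m)} (x (⋃ m, A m))

/-- The spectral resolution `F_x` of an observable `x`. -/
def specRes {n : ℕ} (x : Set (Fin n → ℝ) → H ×ₗ G) : (Fin n → ℝ) → H ×ₗ G :=
  fun t => x {s | ∀ i, s i < t i}

/-- The increment `V(F,[a,b))`. -/
def boxSum {n : ℕ} (F : (Fin n → ℝ) → H ×ₗ G) (a b : Fin n → ℝ) : H ×ₗ G :=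
  ∑ S : Finset (Fin n), ((-1 : ℤ) ^ (n - S.card)) • F (fun i => if i ∈ S then b i else a i)

/-- `F` is an `n`-dimensional spectral resolution on `Γ(H ⋉ G, (u,0))`. -/
def IsSpectralResolution (u : H) (n : ℕ) (F : (Fin n → ℝ) → H ×ₗ G) : Prop :=
  Monotone F ∧
  IsLUB (Set.range F) (toLex (u, (0 : G))) ∧
  (∀ t : Fin n → ℝ, IsLUB {y | ∃ s : Fin n → ℝ, (∀ i, s i < t i) ∧ y = F s} (F t)) ∧
  (∀ (i : Fin n) (s : Fin n → ℝ),
      IsGLB {y | ∃ r : ℝ, y = F (Function.update s i r)} (toLex ((0 : H), (0 : G)))) ∧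
  (∀ a b : Fin n → ℝ, a ≤ b →
      toLex ((0 : H), (0 : G)) ≤ boxSum F a b ∧ boxSum F a b ≤ toLex (u, (0 : G)))

/-- `T_h = {s ∈ ℝⁿ : F s ∈ M_h}`. -/
def TSet (u : H) {n : ℕ} (F : (Fin n → ℝ) → H ×ₗ G) (h : H) : Set (Fin n → ℝ) :=
  {s | F s ∈ MLevel u h}

/-- The projection `π_j^h(s)`. -/
noncomputable def proj (u : H) {n : ℕ} (F : (Fin n → ℝ) → H ×ₗ G) (h : H)
    (s : Fin n → ℝ) (j : Fin n) : ℝ :=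
  sInf {r : ℝ | Function.update s j r ∈ TSet u F h}

/-- The characteristic point `π_h(s)` associated to `s ∈ T_h`. -/
noncomputable def charPt (u : H) {n : ℕ} (F : (Fin n → ℝ) → H ×ₗ G) (h : H)
    (s : Fin n → ℝ) : Fin n → ℝ :=
  fun j => proj u F h s j

/-- The set of characteristic points of `T_h`. -/
def charPts (u : H) {n : ℕ} (F : (Fin n → ℝ) → H ×ₗ G) (h : H) : Set (Fin n → ℝ) :=
  charPt u F h '' TSet u F h

/-- The set of all characteristic points of `F`. -/
def charPoints (u : H) {n : ℕ} (F : (Fin n → ℝ) → H ×ₗ G) : Set (Fin n → ℝ) :=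
  {p | ∃ h : H, 0 < h ∧ h ≤ u ∧ p ∈ charPts u F h}

/-- A block of some `T_h`, `0 < h ≤ u`. -/
def IsBlock (u : H) {n : ℕ} (F : (Fin n → ℝ) → H ×ₗ G) (C : Set (Fin n → ℝ)) : Prop :=
  ∃ h : H, 0 < h ∧ h ≤ u ∧ ∃ s ∈ TSet u F h,
    C = {t ∈ TSet u F h | charPt u F h t = charPt u F h s}

/-- A `T_0`-adjoined block. -/
def IsT0AdjBlock (u : H) {n : ℕ} (F : (Fin n → ℝ) → H ×ₗ G) (C : Set (Fin n → ℝ)) : Prop :=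
  ∃ h : H, 0 < h ∧ h ≤ u ∧ (∃ s ∈ TSet u F h,
    C = {t ∈ TSet u F h | charPt u F h t = charPt u F h s}) ∧
    ∀ t ∈ C, ∀ j : Fin n, Function.update t j (proj u F h t j) ∈ TSet u F 0

end Lexi


section AuxProofs

set_option linter.unusedSectionVars false
set_option maxHeartbeats 1000000

variable {G : Type*} [AddCommGroup G] [Lattice G] [CovariantClass G G (· + ·) (· ≤ ·)]

theorem lex_le_iff' (a b : ℤ ×ₗ G) :
    a ≤ b ↔ (ofLex a).1 < (ofLex b).1 ∨ (ofLex a).1 = (ofLex b).1 ∧ (ofLex a).2 ≤ (ofLex b).2 :=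
  Prod.Lex.le_iff

noncomputable instance lexOACG : IsOrderedAddMonoid (ℤ ×ₗ G) :=
  { add_le_add_left := by
      intro a b h c
      rw [lex_le_iff'] at h ⊢
      rcases h with h | ⟨h1, h2⟩
      · left; simpa using h
      · right
        exact ⟨by simpa using h1, by simpa using add_le_add h2 (le_refl (ofLex c).2)⟩ }

theorem lex_fst_mono {a b : ℤ ×ₗ G} (h : a ≤ b) : (ofLex a).1 ≤ (ofLex b).1 := by
  rw [lex_le_iff'] at h
  rcases h with h | ⟨h1, _⟩
  · exact le_of_lt h
  · exact le_of_eq h1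

theorem lex_fst_add (a b : ℤ ×ₗ G) : (ofLex (a + b)).1 = (ofLex a).1 + (ofLex b).1 := rfl

theorem lex_fst_zero : (ofLex (0 : ℤ ×ₗ G)).1 = 0 := rfl

/-- If `b` is the LUB of `S` and every element of `S` has first coordinate strictly
less than that of `b`, we get a contradiction. -/
theorem lemL {S : Set (ℤ ×ₗ G)} {b : ℤ ×ₗ G} (hlub : IsLUB S b)
    (h : ∀ y ∈ S, (ofLex y).1 < (ofLex b).1) : False := by
  have hub : ∀ g : G, toLex ((ofLex b).1, g) ∈ upperBounds S := by
    intro g y hy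
    rw [lex_le_iff']
    left
    simpa using h y hy
  have hb : ∀ g : G, (ofLex b).2 ≤ g := by
    intro g
    have h2 := hlub.2 (hub g)
    rw [lex_le_iff'] at h2
    rcases h2 with h2 | ⟨_, h2⟩
    · simp at h2
    · simpa using h2
  have htriv : ∀ g : G, g = (0 : G) := by
    intro g
    have h1 : (ofLex b).2 ≤ (ofLex b).2 + g := hb _
    have h2 : (ofLex b).2 ≤ (ofLex b).2 + -g := hb _
    have h1' : (0 : G) ≤ g := (le_add_iff_nonneg_right _).mp h1
    have h2' : (0 : G) ≤ -g := (le_add_iff_nonneg_right _).mp h2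
    exact le_antisymm (neg_nonneg.mp h2') h1'
  have hub2 : toLex ((ofLex b).1 - 1, (0 : G)) ∈ upperBounds S := by
    intro y hy
    rw [lex_le_iff']
    have hy1 := h y hy
    rcases eq_or_lt_of_le (show (ofLex y).1 ≤ (ofLex b).1 - 1 by omega) with hc | hc
    · right
      exact ⟨by simpa using hc, by simp [htriv (ofLex y).2]⟩
    · left
      simpa using hc
  have hfin := lex_fst_mono (hlub.2 hub2)
  have : (ofLex b).1 ≤ (ofLex b).1 - 1 := by simpa using hfin
  omega

variable {n : ℕ} {x : Set (Fin n → ℝ) → ℤ ×ₗ G} {u : ℤ}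

theorem obs_nonneg (hx : IsObservable u n x) {A : Set (Fin n → ℝ)} (hA : MeasurableSet A) :
    (0 : ℤ ×ₗ G) ≤ x A := (hx.1 A hA).1

theorem obs_le_top (hx : IsObservable u n x) {A : Set (Fin n → ℝ)} (hA : MeasurableSet A) :
    x A ≤ toLex (u, (0 : G)) := (hx.1 A hA).2

theorem x_empty (hx : IsObservable u n x) : x ∅ = 0 := by
  have hσ := (hx.2.2 (fun _ => (∅ : Set (Fin n → ℝ))) (fun _ => MeasurableSet.empty)
    (fun i j hij => by simp [Function.onFun])).2
  rw [Set.iUnion_empty] at hσ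
  have hmem : x ∅ + x ∅ ∈ {y | ∃ F : Finset ℕ, y = ∑ _m ∈ F, x ∅} :=
    ⟨({0, 1} : Finset ℕ), by rw [Finset.sum_pair (by norm_num)]⟩
  have hle : x ∅ + x ∅ ≤ x ∅ := hσ.1 hmem
  have h0 : x ∅ ≤ 0 := (add_le_iff_nonpos_left).mp hle
  exact le_antisymm h0 (obs_nonneg hx MeasurableSet.empty)

theorem x_union (hx : IsObservable u n x) {A B : Set (Fin n → ℝ)}
    (hA : MeasurableSet A) (hB : MeasurableSet B) (hAB : Disjoint A B) :
    x (A ∪ B) = x A + x B := by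
  classical
  set A' : ℕ → Set (Fin n → ℝ) := fun m => if m = 0 then A else if m = 1 then B else ∅ with hA'
  have hA'meas : ∀ m, MeasurableSet (A' m) := by
    intro m
    simp only [hA']
    split_ifs <;> first | exact hA | exact hB | exact MeasurableSet.empty
  have hA'disj : Pairwise (Disjoint on A') := by
    intro i j hij
    simp only [Function.onFun, hA']
    split_ifs <;> simp_all [hAB, hAB.symm]
  have hU : (⋃ m, A' m) = A ∪ B := by
    apply Set.Subset.antisymm
    · refine Set.iUnion_subset fun m => ?_
      simp only [hA']
      split_ifs <;> simp
    · rintro p (hp | hp)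
      · exact Set.mem_iUnion.mpr ⟨0, by simp [hA', hp]⟩
      · exact Set.mem_iUnion.mpr ⟨1, by simp [hA', hp]⟩
  have hσ := (hx.2.2 A' hA'meas hA'disj).2
  rw [hU] at hσ
  have hsum01 : ∑ m ∈ ({0, 1} : Finset ℕ), x (A' m) = x A + x B := by
    rw [Finset.sum_pair (by norm_num)]
    simp [hA']
  have hmem : x A + x B ∈ {y | ∃ F : Finset ℕ, y = ∑ m ∈ F, x (A' m)} :=
    ⟨({0, 1} : Finset ℕ), hsum01.symm⟩
  have hub : x A + x B ∈ upperBounds {y | ∃ F : Finset ℕ, y = ∑ m ∈ F, x (A' m)} := by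
    rintro y ⟨F, rfl⟩
    calc ∑ m ∈ F, x (A' m) ≤ ∑ m ∈ F ∪ {0, 1}, x (A' m) := by
          apply Finset.sum_le_sum_of_subset_of_nonneg Finset.subset_union_left
          intro i _ _
          exact obs_nonneg hx (hA'meas i)
      _ = ∑ m ∈ ({0, 1} : Finset ℕ), x (A' m) := by
          refine (Finset.sum_subset Finset.subset_union_right ?_).symm
          intro m _ hm
          simp only [Finset.mem_insert, Finset.mem_singleton] at hm
          push_neg at hm
          have : A' m = ∅ := by simp [hA', hm.1, hm.2]
          rw [this, x_empty hx]
      _ = x A + x B := hsum01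
  exact le_antisymm (hσ.2 hub) (hσ.1 hmem)

theorem x_mono (hx : IsObservable u n x) {A B : Set (Fin n → ℝ)}
    (hA : MeasurableSet A) (hB : MeasurableSet B) (hAB : A ⊆ B) : x A ≤ x B := by
  have h1 : x B = x A + x (B \ A) := by
    rw [← x_union hx hA (hB.diff hA) disjoint_sdiff_self_right, Set.union_diff_cancel hAB]
  rw [h1]
  simpa using add_le_add_left (obs_nonneg hx (hB.diff hA)) (x A)

theorem x_biUnion (hx : IsObservable u n x) (D : ℕ → Set (Fin n → ℝ))
    (hmeas : ∀ m, MeasurableSet (D m)) (hdisj : Pairwise (Disjoint on D)) (F : Finset ℕ) :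
    x (⋃ m ∈ F, D m) = ∑ m ∈ F, x (D m) := by
  classical
  induction F using Finset.induction_on with
  | empty => simpa using x_empty hx
  | @insert a F ha ih =>
      rw [Finset.sum_insert ha, Finset.set_biUnion_insert, ← ih,
        x_union hx (hmeas a) (F.measurableSet_biUnion fun b _ => hmeas b) ?_]
      exact Set.disjoint_iUnion₂_right.mpr fun m hm => hdisj (fun h => ha (h ▸ hm))

/-- Continuity from below at the level of the first coordinate. -/
theorem mainA (hx : IsObservable u n x) (C : ℕ → Set (Fin n → ℝ))
    (hmono : Monotone C) (hmeas : ∀ m, MeasurableSet (C m)) :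
    ∃ N, (ofLex (x (⋃ m, C m))).1 ≤ (ofLex (x (C N))).1 := by
  by_contra hcon
  push_neg at hcon
  have hDmeas : ∀ m, MeasurableSet (disjointed C m) := MeasurableSet.disjointed hmeas
  have hDdisj := disjoint_disjointed C
  have hlub := (hx.2.2 _ hDmeas hDdisj).2
  rw [iUnion_disjointed] at hlub
  refine lemL hlub ?_
  rintro y ⟨F, rfl⟩
  obtain ⟨N, hFN⟩ := F.exists_nat_subset_range
  have h1 : ∑ m ∈ F, x (disjointed C m) = x (⋃ m ∈ F, disjointed C m) :=
    (x_biUnion hx _ hDmeas hDdisj F).symm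
  have h2 : (⋃ m ∈ F, disjointed C m) ⊆ C N := by
    intro p hp
    simp only [Set.mem_iUnion] at hp
    obtain ⟨m, hmF, hp⟩ := hp
    exact hmono (le_of_lt (Finset.mem_range.mp (hFN hmF))) (disjointed_subset C m hp)
  have h3 : x (⋃ m ∈ F, disjointed C m) ≤ x (C N) :=
    x_mono hx (F.measurableSet_biUnion fun b _ => hDmeas b) (hmeas N) h2
  rw [h1]
  exact lt_of_le_of_lt (lex_fst_mono h3) (hcon N)

/-- A decreasing sequence of measurable sets with empty intersection cannot keep
its first coordinate maximal. -/
theorem mainB (hx : IsObservable u n x) (C : ℕ → Set (Fin n → ℝ))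
    (hanti : Antitone C) (hmeas : ∀ m, MeasurableSet (C m)) (hempty : (⋂ m, C m) = ∅)
    (hfst : ∀ m, (ofLex (x (C 0))).1 ≤ (ofLex (x (C m))).1)
    (hpos : 0 < (ofLex (x (C 0))).1) : False := by
  obtain ⟨N, hN⟩ := mainA hx (fun m => C 0 \ C m)
    (fun a b hab => Set.diff_subset_diff_right (hanti hab))
    (fun m => (hmeas 0).diff (hmeas m))
  have hU : (⋃ m, C 0 \ C m) = C 0 := by
    rw [← Set.diff_iInter, hempty, Set.diff_empty]
  rw [hU] at hN
  have hdecomp : x (C 0) = x (C 0 \ C N) + x (C N) := by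
    rw [← x_union hx ((hmeas 0).diff (hmeas N)) (hmeas N) disjoint_sdiff_self_left,
      Set.diff_union_of_subset (hanti (Nat.zero_le N))]
  have hf := congrArg (fun z => (ofLex z).1) hdecomp
  simp only [lex_fst_add] at hf
  have hfN := hfst N
  omega

end AuxProofs

theorem stmt_9 {G : Type*}
    [AddCommGroup G] [Lattice G] [CovariantClass G G (· + ·) (· ≤ ·)]
    (hG : DedekindSigmaComplete G) (k : ℕ) (hk : 1 ≤ k) (n : ℕ) (hn : 1 ≤ n)
    (x : Set (Fin n → ℝ) → ℤ ×ₗ G) (hx : IsObservable (k : ℤ) n x) :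
    (TSet (k : ℤ) (specRes x) (k : ℤ)).Nonempty ∧
      ∃ t0 : Fin n → ℝ,
        charPts (k : ℤ) (specRes x) (k : ℤ) = {t0} ∧
        TSet (k : ℤ) (specRes x) (k : ℤ) = {p : Fin n → ℝ | ∀ i, t0 i < p i} := by
  classical
  have hk' : (1 : ℤ) ≤ (k : ℤ) := by exact_mod_cast hk
  haveI : Nonempty (Fin n) := Fin.pos_iff_nonempty.mp (by omega)
  set u : ℤ := (k : ℤ) with hu
  -- box sets
  set B : (Fin n → ℝ) → Set (Fin n → ℝ) := fun t => {s | ∀ i, s i < t i} with hBdef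
  have hBmeas : ∀ t, MeasurableSet (B t) := by
    intro t
    have hEq : B t = ⋂ i, (fun s : Fin n → ℝ => s i) ⁻¹' Set.Iio (t i) := by
      ext s
      simp [hBdef, Set.mem_iInter]
    rw [hEq]
    exact MeasurableSet.iInter fun i => (measurable_pi_apply i) measurableSet_Iio
  have hBmono : ∀ {s t : Fin n → ℝ}, s ≤ t → B s ⊆ B t := by
    intro s t hst p hp i
    exact lt_of_lt_of_le (hp i) (hst i)
  have hspec : ∀ t, specRes x t = x (B t) := fun t => rfl
  have hfst_le : ∀ A : Set (Fin n → ℝ), MeasurableSet A → (ofLex (x A)).1 ≤ u := by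
    intro A hA
    have h := lex_fst_mono (obs_le_top hx hA)
    simpa using h
  have hfst_nonneg : ∀ A : Set (Fin n → ℝ), MeasurableSet A → 0 ≤ (ofLex (x A)).1 := by
    intro A hA
    have h := lex_fst_mono (obs_nonneg hx hA)
    simpa using h
  set T : Set (Fin n → ℝ) := TSet u (specRes x) u with hTdef
  have hTmem : ∀ s, s ∈ T ↔ (ofLex (x (B s))).1 = u := by
    intro s
    constructor
    · intro h
      exact h.2
    · intro h
      exact ⟨hx.1 _ (hBmeas s), h⟩
  -- T is an upper set
  have hTupper : ∀ s ∈ T, ∀ t, s ≤ t → t ∈ T := by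
    intro s hs t hst
    rw [hTmem] at hs ⊢
    have h1 := lex_fst_mono (x_mono hx (hBmeas s) (hBmeas t) (hBmono hst))
    have h2 := hfst_le (B t) (hBmeas t)
    omega
  -- T is closed under pointwise min
  have hTmeet : ∀ s ∈ T, ∀ t ∈ T, s ⊓ t ∈ T := by
    intro s hs t ht
    rw [hTmem] at hs ht ⊢
    have hint : B (s ⊓ t) = B s ∩ B t := by
      ext q
      simp only [hBdef, Set.mem_setOf_eq, Set.mem_inter_iff, Pi.inf_apply, lt_inf_iff]
      exact forall_and
    have e1 : x (B s ∪ B t) = x (B s) + x (B t \ B s) := by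
      rw [← x_union hx (hBmeas s) ((hBmeas t).diff (hBmeas s)) disjoint_sdiff_self_right,
        Set.union_diff_self]
    have e2 : x (B t) = x (B t ∩ B s) + x (B t \ B s) := by
      conv_lhs => rw [← Set.inter_union_diff (B t) (B s)]
      rw [x_union hx ((hBmeas t).inter (hBmeas s)) ((hBmeas t).diff (hBmeas s))
        (disjoint_sdiff_self_right.mono_left Set.inter_subset_right)]
    have f1 := congrArg (fun z => (ofLex z).1) e1
    have f2 := congrArg (fun z => (ofLex z).1) e2
    simp only [lex_fst_add] at f1 f2
    have hule : (ofLex (x (B s ∪ B t))).1 ≤ u := hfst_le _ ((hBmeas s).union (hBmeas t))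
    have hle2 : (ofLex (x (B t ∩ B s))).1 ≤ u := hfst_le _ ((hBmeas t).inter (hBmeas s))
    have hcomm : B t ∩ B s = B s ∩ B t := Set.inter_comm _ _
    rw [hint, ← hcomm]
    omega
  -- T is nonempty
  have hTne : T.Nonempty := by
    have hCU : (⋃ m : ℕ, B (fun _ => (m : ℝ))) = Set.univ := by
      apply Set.eq_univ_of_forall
      intro s
      obtain ⟨m, hm⟩ : ∃ m : ℕ, ∀ i, s i < m := by
        refine ⟨(Finset.univ.sup fun i => ⌈s i⌉₊) + 1, fun i => ?_⟩
        have h1 : s i ≤ (⌈s i⌉₊ : ℝ) := Nat.le_ceil _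
        have h2 : (⌈s i⌉₊ : ℕ) ≤ Finset.univ.sup fun i => ⌈s i⌉₊ :=
          Finset.le_sup (f := fun i => ⌈s i⌉₊) (Finset.mem_univ i)
        have h3 : ((⌈s i⌉₊ : ℕ) : ℝ) ≤ ((Finset.univ.sup fun i => ⌈s i⌉₊ : ℕ) : ℝ) := by
          exact_mod_cast h2
        push_cast
        linarith
      exact Set.mem_iUnion.mpr ⟨m, hm⟩
    obtain ⟨N, hN⟩ := mainA hx (fun m : ℕ => B (fun _ => (m : ℝ)))
      (fun a b hab => hBmono (fun i => by exact Nat.cast_le.mpr hab)) (fun m => hBmeas _)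
    rw [hCU] at hN
    have hxu : x Set.univ = toLex (u, (0 : G)) := hx.2.1
    rw [hxu] at hN
    simp only [ofLex_toLex] at hN
    refine ⟨fun _ => (N : ℝ), ?_⟩
    rw [hTmem]
    have := hfst_le _ (hBmeas (fun _ => (N : ℝ)))
    omega
  -- left openness in each coordinate
  have hleftOpen : ∀ p ∈ T, ∀ j : Fin n, ∃ q ∈ T, q ≤ p ∧ q j < p j := by
    intro p hp j
    set C : ℕ → Set (Fin n → ℝ) :=
      fun m => B (Function.update p j (p j - 1 / ((m : ℝ) + 1))) with hCdef
    have hCmono : Monotone C := by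
      intro a b hab
      apply hBmono
      intro i
      rcases eq_or_ne i j with rfl | hij
      · simp only [Function.update_self]
        have hpos : (0 : ℝ) < (a : ℝ) + 1 := by positivity
        have : (1 : ℝ) / ((b : ℝ) + 1) ≤ 1 / ((a : ℝ) + 1) := by
          apply one_div_le_one_div_of_le hpos
          have : (a : ℝ) ≤ (b : ℝ) := by exact_mod_cast hab
          linarith
        linarith
      · simp [Function.update_of_ne hij]
    have hCU : (⋃ m, C m) = B p := by
      apply Set.Subset.antisymm
      · refine Set.iUnion_subset fun m => ?_
        apply hBmono
        intro i
        rcases eq_or_ne i j with rfl | hij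
        · simp only [Function.update_self]
          have hpos : (0 : ℝ) < 1 / ((m : ℝ) + 1) := by positivity
          linarith
        · simp [Function.update_of_ne hij]
      · intro q hq
        obtain ⟨m, hm⟩ := exists_nat_one_div_lt (show (0 : ℝ) < p j - q j from
          sub_pos.mpr (hq j))
        refine Set.mem_iUnion.mpr ⟨m, fun i => ?_⟩
        rcases eq_or_ne i j with rfl | hij
        · simp only [Function.update_self]
          linarith
        · simp only [Function.update_of_ne hij]
          exact hq i
    obtain ⟨N, hN⟩ := mainA hx C hCmono (fun m => hBmeas _)
    rw [hCU] at hN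
    simp only [hCdef] at hN
    have hpk : (ofLex (x (B p))).1 = u := (hTmem p).mp hp
    refine ⟨Function.update p j (p j - 1 / ((N : ℝ) + 1)), ?_, ?_, ?_⟩
    · rw [hTmem]
      have := hfst_le _ (hBmeas (Function.update p j (p j - 1 / ((N : ℝ) + 1))))
      omega
    · intro i
      rcases eq_or_ne i j with rfl | hij
      · simp only [Function.update_self]
        have hpos : (0 : ℝ) < 1 / ((N : ℝ) + 1) := by positivity
        linarith
      · simp [Function.update_of_ne hij]
    · simp only [Function.update_self]
      have hpos : (0 : ℝ) < 1 / ((N : ℝ) + 1) := by positivity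
      linarith
  -- lower boundedness of the coordinate sections of T
  have hRbdd : ∀ s ∈ T, ∀ j : Fin n, BddBelow {r : ℝ | Function.update s j r ∈ T} := by
    intro s hs j
    by_contra hnb
    have hall : ∀ m : ℕ, Function.update s j (-(m : ℝ)) ∈ T := by
      intro m
      obtain ⟨r, hr, hrm⟩ := not_bddBelow_iff.mp hnb (-(m : ℝ))
      refine hTupper _ hr _ ?_
      intro i
      rcases eq_or_ne i j with rfl | hij
      · simp only [Function.update_self]
        linarith
      · simp [Function.update_of_ne hij]
    refine mainB hx (fun m : ℕ => B (Function.update s j (-(m : ℝ)))) ?_ (fun m => hBmeas _)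
      ?_ ?_ ?_
    · intro a b hab
      apply hBmono
      intro i
      rcases eq_or_ne i j with rfl | hij
      · simp only [Function.update_self]
        have : (a : ℝ) ≤ (b : ℝ) := by exact_mod_cast hab
        linarith
      · simp [Function.update_of_ne hij]
    · apply Set.eq_empty_iff_forall_notMem.mpr
      intro q hq
      obtain ⟨m, hm⟩ := exists_nat_gt (-(q j))
      have hq' := Set.mem_iInter.mp hq m
      have : q j < -(m : ℝ) := by
        have := hq' j
        simpa [Function.update_self] using this
      linarith
    · intro m
      show (ofLex (x (B (Function.update s j (-((0 : ℕ) : ℝ)))))).1 ≤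
        (ofLex (x (B (Function.update s j (-((m : ℕ) : ℝ)))))).1
      rw [(hTmem _).mp (hall 0), (hTmem _).mp (hall m)]
    · show 0 < (ofLex (x (B (Function.update s j (-((0 : ℕ) : ℝ)))))).1
      rw [(hTmem _).mp (hall 0)]
      omega
  -- the candidate characteristic point
  obtain ⟨sstar, hsstar⟩ := hTne
  set t0 : Fin n → ℝ := fun j => sInf {r : ℝ | Function.update sstar j r ∈ T} with ht0
  have hRne : ∀ s ∈ T, ∀ j : Fin n, s j ∈ {r : ℝ | Function.update s j r ∈ T} := by
    intro s hs j
    simpa [Function.update_eq_self] using hs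
  have hsubset : ∀ p ∈ T, ∀ j, t0 j < p j := by
    intro p hp j
    obtain ⟨q, hq, hqle, hqj⟩ := hleftOpen p hp j
    have hmem : q j ∈ {r : ℝ | Function.update sstar j r ∈ T} := by
      refine hTupper _ (hTmeet sstar hsstar q hq) _ ?_
      intro i
      rcases eq_or_ne i j with rfl | hij
      · simp only [Function.update_self, Pi.inf_apply]
        exact inf_le_right
      · simp only [Function.update_of_ne hij, Pi.inf_apply]
        exact inf_le_left
    calc t0 j ≤ q j := csInf_le (hRbdd sstar hsstar j) hmem
      _ < p j := hqj
  have hsupset : ∀ p : Fin n → ℝ, (∀ j, t0 j < p j) → p ∈ T := by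
    intro p hp
    have hex : ∀ j, ∃ r, Function.update sstar j r ∈ T ∧ r < p j := by
      intro j
      obtain ⟨r, hr, hrlt⟩ := exists_lt_of_csInf_lt ⟨sstar j, hRne sstar hsstar j⟩ (hp j)
      exact ⟨r, hr, hrlt⟩
    choose r hrT hrlt using hex
    have hFinNe : (Finset.univ : Finset (Fin n)).Nonempty := Finset.univ_nonempty
    have hwmem : Finset.univ.inf' hFinNe (fun j => Function.update sstar j (r j)) ∈ T :=
      Finset.inf'_mem T (fun a ha b hb => hTmeet a ha b hb) _ hFinNe _ (fun j _ => hrT j)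
    refine hTupper _ hwmem _ ?_
    intro i
    have h1 : Finset.univ.inf' hFinNe (fun j => Function.update sstar j (r j)) ≤
        Function.update sstar i (r i) :=
      Finset.inf'_le _ (Finset.mem_univ i)
    have h2 := h1 i
    simp only [Function.update_self] at h2
    exact le_of_lt (lt_of_le_of_lt h2 (hrlt i))
  have hTeq : T = {p : Fin n → ℝ | ∀ i, t0 i < p i} := by
    ext p
    exact ⟨fun hp i => hsubset p hp i, fun hp => hsupset p hp⟩
  have hchar : ∀ s ∈ T, charPt u (specRes x) u s = t0 := by
    intro s hs
    funext j
    show sInf {r : ℝ | Function.update s j r ∈ T} = t0 j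
    have hset : {r : ℝ | Function.update s j r ∈ T} = Set.Ioi (t0 j) := by
      ext rr
      simp only [Set.mem_setOf_eq, Set.mem_Ioi]
      constructor
      · intro h
        have h2 := hsubset _ h j
        simpa [Function.update_self] using h2
      · intro h
        apply hsupset
        intro i
        rcases eq_or_ne i j with rfl | hij
        · simpa [Function.update_self] using h
        · simp only [Function.update_of_ne hij]
          exact hsubset s hs i
    rw [hset, csInf_Ioi]
  refine ⟨⟨sstar, hsstar⟩, t0, ?_, hTeq⟩
  apply Set.eq_singleton_iff_unique_mem.mpr
  constructor
  · exact ⟨sstar, hsstar, hchar sstar hsstar⟩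
  · rintro q ⟨s, hs, rfl⟩
    exact hchar s hs
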